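/- Fix a prime p and integers n ≥ 1 and d ≥ 0. Let E(n)_e denote the free F_p-module on (e+1)-tuples (ρ_0,…,ρ_e) of permutations of {1,…,n} with no two adjacent entries equal (the degree-e normalized chains on EΣ_n). Then the F_p-linear map Ψ : E(n)_{d+n−1} → E(n)_d, defined on a basis tuple (ρ_0,…,ρ_{d+n−1}) by Ψ(ρ_0,…,ρ_{d+n−1}) = (ρ_{n−1},…,ρ_{d+n−1}) if (ρ_0(1),…,ρ_{n−1}(1)) is a permutation of (1,…,n) and the truncated tuple has no two adjacent entries equal, and Ψ(ρ_0,…,ρ_{d+n−1}) = 0 otherwise, is surjective. -/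

import Mathlib

/-! Statement 10: surjectivity of the stabilization map of the Barratt–Eccles operad in each
arity and degree (after untwisting operadic suspensions). -/

open Function

/-- Tuples `(ρ₀, …, ρ_e)` of permutations of `{1, …, n}` with no two adjacent entries equal:
a basis for the degree `e` normalized chains on `EΣ_n`. -/
def Tup (n e : ℕ) : Type :=
  {f : Fin (e + 1) → Equiv.Perm (Fin n) // ∀ i : Fin e, f i.castSucc ≠ f i.succ}

/-- The degree `e` normalized chains on `EΣ_n` with `F_p` coefficients: the free `F_p`-module
on nondegenerate tuples. -/
abbrev EChains (p n e : ℕ) : Type := Tup n e →₀ ZMod p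

/-- The sequence `(ρ₀(1), …, ρ_{n-1}(1))` of values at `1` of the first `n` entries of a
tuple of permutations. -/
def firstVals {n d : ℕ} (hn : 1 ≤ n) (f : Tup n (d + n - 1)) : Fin n → Fin n :=
  fun k => f.val ⟨k.val, by omega⟩ ⟨0, by omega⟩

/-- The truncated tuple `(ρ_{n-1}, …, ρ_{d+n-1})`; it automatically has no two equal
adjacent entries. -/
def truncTup {n d : ℕ} (hn : 1 ≤ n) (f : Tup n (d + n - 1)) : Tup n d :=
  ⟨fun t => f.val ⟨n - 1 + t.val, by omega⟩, by
    intro i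
    have := f.property ⟨n - 1 + i.val, by omega⟩
    simpa [Fin.castSucc, Fin.succ, Fin.castAdd, Fin.castLE, Nat.add_assoc] using this⟩

open Classical in
/-- The basis values of the stabilization map `Ψ`: a tuple `(ρ₀, …, ρ_{d+n-1})` is sent to the
truncation `(ρ_{n-1}, …, ρ_{d+n-1})` if `(ρ₀(1), …, ρ_{n-1}(1))` is a permutation of
`(1, …, n)`, and to `0` otherwise. -/
noncomputable def psiBasis (p : ℕ) {n d : ℕ} (hn : 1 ≤ n) (f : Tup n (d + n - 1)) :
    EChains p n d :=
  if Function.Bijective (firstVals hn f) then Finsupp.single (truncTup hn f) 1 else 0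

/-- The stabilization map `Ψ : E(n)_{d+n-1} → E(n)_d`, extended `F_p`-linearly from its values
on basis tuples. -/
noncomputable def psi (p : ℕ) {n d : ℕ} (hn : 1 ≤ n) :
    EChains p n (d + n - 1) →ₗ[ZMod p] EChains p n d :=
  Finsupp.lift (EChains p n d) (ZMod p) (Tup n (d + n - 1)) (psiBasis p hn)

/-- skip-`a` embedding -/
def bfun {n : ℕ} (a : Fin n) (k : ℕ) (hk : k < n - 1) : Fin n :=
  if k < a.val then ⟨k, by omega⟩ else ⟨k + 1, by omega⟩

lemma bfun_val {n : ℕ} (a : Fin n) (k : ℕ) (hk : k < n - 1) :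
    (bfun a k hk).val = if k < a.val then k else k + 1 := by
  unfold bfun; split <;> rfl

lemma bfun_ne {n : ℕ} (a : Fin n) (k : ℕ) (hk : k < n - 1) : bfun a k hk ≠ a := by
  intro h
  have := congrArg Fin.val h
  rw [bfun_val] at this
  split at this <;> omega

lemma bfun_inj {n : ℕ} (a : Fin n) (k k' : ℕ) (hk : k < n - 1) (hk' : k' < n - 1)
    (h : bfun a k hk = bfun a k' hk') : k = k' := by
  have := congrArg Fin.val h
  rw [bfun_val, bfun_val] at this
  split at this <;> split at this <;> omega

noncomputable def preFun {n d : ℕ} (hn : 1 ≤ n) (g : Tup n d) (i : Fin (d + n - 1 + 1)) :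
    Equiv.Perm (Fin n) :=
  if h : i.val < n - 1 then
    Equiv.swap (g.val ⟨0, by omega⟩ ⟨0, by omega⟩) (bfun (g.val ⟨0, by omega⟩ ⟨0, by omega⟩) i.val h)
      * g.val ⟨0, by omega⟩
  else g.val ⟨i.val - (n - 1), by have := i.isLt; omega⟩

lemma preFun_lt {n d : ℕ} (hn : 1 ≤ n) (g : Tup n d) (i : Fin (d + n - 1 + 1))
    (h : i.val < n - 1) :
    preFun hn g i ⟨0, by omega⟩ = bfun (g.val ⟨0, by omega⟩ ⟨0, by omega⟩) i.val h := by
  rw [preFun, dif_pos h, Equiv.Perm.mul_apply, Equiv.swap_apply_left]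

lemma preFun_ge {n d : ℕ} (hn : 1 ≤ n) (g : Tup n d) (i : Fin (d + n - 1 + 1))
    (h : ¬ i.val < n - 1) :
    preFun hn g i = g.val ⟨i.val - (n - 1), by have := i.isLt; omega⟩ := by
  rw [preFun, dif_neg h]

lemma preFun_ge' {n d : ℕ} (hn : 1 ≤ n) (g : Tup n d) (i : Fin (d + n - 1 + 1))
    (h : ¬ i.val < n - 1) (j : Fin (d + 1)) (hj : j.val = i.val - (n - 1)) :
    preFun hn g i = g.val j := by
  rw [preFun_ge hn g i h]
  exact congrArg g.val (Fin.ext hj.symm)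

set_option maxHeartbeats 1000000 in
noncomputable def preTup {n d : ℕ} (hn : 1 ≤ n) (g : Tup n d) : Tup n (d + n - 1) :=
  ⟨preFun hn g, by
    intro i heq
    have hcs : (i.castSucc : Fin (d + n - 1 + 1)).val = i.val := rfl
    have hsu : (i.succ : Fin (d + n - 1 + 1)).val = i.val + 1 := rfl
    by_cases h1 : i.val + 1 < n - 1
    · have h0 : i.val < n - 1 := by omega
      have hthis := congrArg (fun σ : Equiv.Perm (Fin n) => σ ⟨0, by omega⟩) heq
      rw [preFun_lt hn g i.castSucc (by rw [hcs]; omega),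
          preFun_lt hn g i.succ (by rw [hsu]; omega)] at hthis
      have := bfun_inj _ _ _ _ _ hthis
      rw [hcs, hsu] at this
      omega
    · by_cases h0 : i.val < n - 1
      · -- junction: i.val = n - 2, i.val + 1 = n - 1
        have hthis := congrArg (fun σ : Equiv.Perm (Fin n) => σ ⟨0, by omega⟩) heq
        rw [preFun_lt hn g i.castSucc (by rw [hcs]; omega),
            preFun_ge' hn g i.succ (by rw [hsu]; omega) ⟨0, by omega⟩
              (by simp only [Fin.val_succ]; omega)] at hthis
        exact bfun_ne _ _ _ hthis
      · have hlt : i.val - (n - 1) < d := by have := i.isLt; omega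
        rw [preFun_ge' hn g i.castSucc (by rw [hcs]; omega)
              (Fin.castSucc ⟨i.val - (n - 1), hlt⟩) (by rw [hcs]; rfl),
            preFun_ge' hn g i.succ (by rw [hsu]; omega)
              (Fin.succ ⟨i.val - (n - 1), hlt⟩)
              (by rw [hsu]; simp only [Fin.val_succ]; omega)] at heq
        exact g.property ⟨i.val - (n - 1), hlt⟩ heq⟩

set_option maxHeartbeats 1000000 in
lemma trunc_preTup {n d : ℕ} (hn : 1 ≤ n) (g : Tup n d) : truncTup hn (preTup hn g) = g := by
  apply Subtype.ext
  funext t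
  show preFun hn g ⟨n - 1 + t.val, _⟩ = g.val t
  exact preFun_ge' hn g _ (by show ¬ n - 1 + t.val < n - 1; omega) t
    (by show t.val = n - 1 + t.val - (n - 1); omega)

lemma firstVals_lt {n d : ℕ} (hn : 1 ≤ n) (g : Tup n d) (m : Fin n) (h : m.val < n - 1) :
    firstVals hn (preTup hn g) m = bfun (g.val ⟨0, by omega⟩ ⟨0, by omega⟩) m.val h :=
  preFun_lt hn g ⟨m.val, by omega⟩ h

lemma firstVals_ge {n d : ℕ} (hn : 1 ≤ n) (g : Tup n d) (m : Fin n) (h : ¬ m.val < n - 1) :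
    firstVals hn (preTup hn g) m = g.val ⟨0, by omega⟩ ⟨0, by omega⟩ :=
  congrArg (fun σ : Equiv.Perm (Fin n) => σ ⟨0, by omega⟩)
    (preFun_ge' hn g ⟨m.val, by omega⟩ h ⟨0, by omega⟩
      (by show (0:ℕ) = m.val - (n - 1); omega))

lemma bij_preTup {n d : ℕ} (hn : 1 ≤ n) (g : Tup n d) :
    Function.Bijective (firstVals hn (preTup hn g)) := by
  rw [Finite.injective_iff_bijective.symm]
  intro k k' hkk
  by_cases h : k.val < n - 1 <;> by_cases h' : k'.val < n - 1
  · exact Fin.ext (bfun_inj _ _ _ h h'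
      ((firstVals_lt hn g k h).symm.trans (hkk.trans (firstVals_lt hn g k' h'))))
  · exact absurd ((firstVals_lt hn g k h).symm.trans (hkk.trans (firstVals_ge hn g k' h')))
      (bfun_ne _ _ _)
  · exact absurd ((firstVals_lt hn g k' h').symm.trans
      (hkk.symm.trans (firstVals_ge hn g k h))) (bfun_ne _ _ _)
  · exact Fin.ext (by have := k.isLt; have := k'.isLt; omega)

set_option maxHeartbeats 1000000 in
lemma psi_single {p n d : ℕ} (hn : 1 ≤ n) (g : Tup n d) :
    psi p hn (Finsupp.single (preTup hn g) 1) = Finsupp.single g 1 := by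
  rw [psi, Finsupp.lift_apply, Finsupp.sum_single_index (by simp), one_smul, psiBasis,
    if_pos (bij_preTup hn g), trunc_preTup]

set_option maxHeartbeats 1000000 in
theorem statement10 (p : ℕ) (hp : p.Prime) (n d : ℕ) (hn : 1 ≤ n) :
    Function.Surjective (psi p (d := d) hn) := by
  intro y
  induction y using Finsupp.induction with
  | zero => exact ⟨0, map_zero _⟩
  | single_add g c rest _ _ ih =>
    obtain ⟨x, hx⟩ := ih
    refine ⟨c • Finsupp.single (preTup hn g) 1 + x, ?_⟩
    rw [map_add, map_smul, psi_single hn g, hx, Finsupp.smul_single, smul_eq_mul, mul_one]
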